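/- arXiv:1005.3799 — 2 statements merged into one kernel-verified Lean document; each statement's English description precedes it below -/
import Mathlib

section
/- Let (Ω, 𝓕, P) be a probability space, T₀ > 0, and let η : Ω × [0,T₀] × [0,T₀] → ℝ be jointly measurable such that, for P-a.e. ω, the function (s,r,τ) ↦ |η(ω,s,r)·η(ω,s,τ)|·log(T₀/(r ∨ τ)) is integrable on [0,T₀]³ and ∫₀^{T₀}∫₀^{T₀} u·η(ω,t,u)² du dt < ∞. If E_P[ exp( ∫₀^{T₀}∫₀^{T₀} [ log(T₀/u)·η(·,t,u)·λ(·,t,u)/2 + u·η(·,t,u)² ] du dt ) ] < ∞, then E_P[ exp( (1/2) ∫₀^{T₀}∫₀^{T₀} g(·,s,u)² du ds ) ] < ∞. -/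
open MeasureTheory Real Set
open scoped ENNReal

/-- The market price of risk: `λ(ω,s,T) = ∫₀^T η(ω,s,u) du`. -/
noncomputable def mpr {Ω : Type*} (η : Ω → ℝ → ℝ → ℝ) (ω : Ω) (s T : ℝ) : ℝ :=
  ∫ u in (0:ℝ)..T, η ω s u

/-- The integrand of the space-time Girsanov kernel:
`g(ω,s,u) = λ(ω,s,u)/(2√u) + √u·η(ω,s,u)`. -/
noncomputable def gker {Ω : Type*} (η : Ω → ℝ → ℝ → ℝ) (ω : Ω) (s u : ℝ) : ℝ :=
  mpr η ω s u / (2 * Real.sqrt u) + Real.sqrt u * η ω s u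


lemma inner_log (T₀ m : ℝ) (hm : 0 < m) (hmT : m ≤ T₀) :
    IntegrableOn (fun u : ℝ => if m ≤ u then 1/u else 0) (Ioc 0 T₀) ∧
    ∫ u in Ioc (0:ℝ) T₀, (if m ≤ u then 1/u else 0) = Real.log (T₀ / m) := by
  have hfun : (fun u : ℝ => if m ≤ u then 1/u else 0) = (Ici m).indicator (fun u => 1/u) := by
    ext u; simp [Set.indicator, Set.mem_Ici]
  have hIcc : Ici m ∩ Ioc 0 T₀ = Icc m T₀ := by
    ext x; simp only [mem_inter_iff, mem_Ici, mem_Ioc, mem_Icc]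
    exact ⟨fun ⟨h1, _, h3⟩ => ⟨h1, h3⟩, fun ⟨h1, h2⟩ => ⟨h1, hm.trans_le h1, h2⟩⟩
  have hcont : IntegrableOn (fun u : ℝ => 1/u) (Icc m T₀) := by
    apply ContinuousOn.integrableOn_compact isCompact_Icc
    exact continuousOn_of_forall_continuousAt fun x hx =>
      (continuousAt_const.div continuousAt_id (ne_of_gt (hm.trans_le hx.1)))
  have hrr : (volume.restrict (Ioc 0 T₀)).restrict (Ici m) = volume.restrict (Icc m T₀) := by
    rw [Measure.restrict_restrict measurableSet_Ici, hIcc]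
  constructor
  · rw [hfun]
    apply (IntegrableOn.integrable_indicator ?_ measurableSet_Ici)
    rw [IntegrableOn, hrr]; exact hcont
  · rw [hfun, integral_indicator measurableSet_Ici]
    rw [show ∫ u in Ici m, (fun u : ℝ => 1/u) u ∂(volume.restrict (Ioc 0 T₀))
        = ∫ u, (fun u : ℝ => 1/u) u ∂((volume.restrict (Ioc 0 T₀)).restrict (Ici m)) from rfl, hrr]
    rw [show ∫ u, (fun u:ℝ => 1/u) u ∂(volume.restrict (Icc m T₀)) = ∫ u in Icc m T₀, 1/u from rfl]
    rw [integral_Icc_eq_integral_Ioc, ← intervalIntegral.integral_of_le hmT]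
    rw [integral_one_div]
    exact fun h => hm.not_ge ((Set.uIcc_of_le hmT ▸ h).1)

lemma f_int (T₀ : ℝ) (hT₀ : 0 < T₀) (f : ℝ → ℝ) (hfm : Measurable f)
    (hK : Integrable (fun p : ℝ × ℝ => |f p.1 * f p.2| * Real.log (T₀ / max p.1 p.2))
      ((volume.restrict (Ioc 0 T₀)).prod (volume.restrict (Ioc 0 T₀))))
    (hQ : IntegrableOn (fun u => u * f u ^ 2) (Ioc 0 T₀)) :
    IntegrableOn f (Ioc 0 T₀) := by
  have h2 : (0:ℝ) < T₀ / 2 := by linarith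
  have hsub : Ioc (0:ℝ) (T₀/2) ⊆ Ioc 0 T₀ := Ioc_subset_Ioc le_rfl (by linarith)
  -- near 0
  have int1 : IntegrableOn f (Ioc 0 (T₀/2)) := by
    refine ⟨hfm.aestronglyMeasurable, ?_⟩
    set I := ∫⁻ u in Ioc (0:ℝ) (T₀/2), ‖f u‖ₑ with hI
    by_contra hfin
    have hItop : I = ⊤ := by
      simpa [HasFiniteIntegral, lt_top_iff_ne_top, not_not] using hfin
    have hprod : ∫⁻ p, (‖f p.1‖ₑ * ‖f p.2‖ₑ : ℝ≥0∞)
        ∂((volume.restrict (Ioc 0 (T₀/2))).prod (volume.restrict (Ioc 0 (T₀/2)))) = I * I := by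
      rw [lintegral_prod_mul (hfm.enorm.aemeasurable) (hfm.enorm.aemeasurable)]
    have hbound : ENNReal.ofReal (Real.log 2) * (I * I) ≤
        ∫⁻ p, ‖|f p.1 * f p.2| * Real.log (T₀ / max p.1 p.2)‖ₑ
          ∂((volume.restrict (Ioc 0 T₀)).prod (volume.restrict (Ioc 0 T₀))) := by
      rw [← hprod, ← lintegral_const_mul _ (by fun_prop)]
      have hmeq : (volume.restrict (Ioc 0 (T₀/2))).prod (volume.restrict (Ioc 0 (T₀/2)))
          = ((volume.restrict (Ioc 0 T₀)).prod (volume.restrict (Ioc 0 T₀))).restrict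
            (Ioc (0:ℝ) (T₀/2) ×ˢ Ioc (0:ℝ) (T₀/2)) := by
        rw [Measure.prod_restrict, Measure.prod_restrict, Measure.restrict_restrict
          (measurableSet_Ioc.prod measurableSet_Ioc)]
        congr 1
        rw [Set.prod_inter_prod]
        congr 1 <;> rw [Set.inter_eq_self_of_subset_left hsub]
      rw [hmeq]
      refine le_trans (lintegral_mono_ae ?_) (setLIntegral_le_lintegral _ _)
      filter_upwards [ae_restrict_mem (measurableSet_Ioc.prod measurableSet_Ioc)] with p hp
      obtain ⟨h1, h2'⟩ := hp
      have hm0 : 0 < max p.1 p.2 := lt_max_of_lt_left h1.1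
      have hmle : max p.1 p.2 ≤ T₀/2 := max_le h1.2 h2'.2
      have hlog2 : Real.log 2 ≤ Real.log (T₀ / max p.1 p.2) :=
        Real.log_le_log two_pos ((le_div_iff₀ hm0).mpr (by linarith))
      have hlognn : 0 ≤ Real.log (T₀ / max p.1 p.2) := le_trans (Real.log_nonneg one_le_two) hlog2
      rw [Real.enorm_eq_ofReal_abs, Real.enorm_eq_ofReal_abs, Real.enorm_eq_ofReal_abs,
        ← ENNReal.ofReal_mul (abs_nonneg _), ← ENNReal.ofReal_mul (Real.log_nonneg one_le_two)]
      apply ENNReal.ofReal_le_ofReal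
      rw [abs_of_nonneg (mul_nonneg (abs_nonneg _) hlognn), abs_mul]
      calc Real.log 2 * (|f p.1| * |f p.2|) = (|f p.1| * |f p.2|) * Real.log 2 := by ring
        _ ≤ |f p.1| * |f p.2| * Real.log (T₀ / max p.1 p.2) := by
            apply mul_le_mul_of_nonneg_left hlog2 (by positivity)
    have hfinK := hK.2
    rw [HasFiniteIntegral] at hfinK
    have hlt : ENNReal.ofReal (Real.log 2) * (I * I) < ⊤ := lt_of_le_of_lt hbound hfinK
    rw [hItop] at hlt
    simp [ENNReal.top_mul, ENNReal.mul_top, Real.log_pos one_lt_two,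
      ENNReal.ofReal_eq_zero, not_le] at hlt
  -- near T₀
  have int2 : IntegrableOn f (Ioc (T₀/2) T₀) := by
    have hmaj : IntegrableOn (fun u => 1 + (2/T₀) * (u * f u ^ 2)) (Ioc (T₀/2) T₀) := by
      apply (integrable_const 1).add
      exact (hQ.mono_set (Ioc_subset_Ioc (le_of_lt h2) le_rfl)).const_mul _
    refine Integrable.mono' hmaj hfm.aestronglyMeasurable ?_
    filter_upwards [ae_restrict_mem measurableSet_Ioc] with u hu
    have hu1 : T₀/2 < u := hu.1
    have h1u : 1 ≤ (2/T₀) * u := by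
      rw [div_mul_eq_mul_div, le_div_iff₀ hT₀]; linarith
    have : f u ^ 2 ≤ (2/T₀) * (u * f u ^ 2) := by
      rw [← mul_assoc]
      nlinarith [sq_nonneg (f u)]
    rw [Real.norm_eq_abs]
    nlinarith [sq_nonneg (|f u| - 1), sq_abs (f u), abs_nonneg (f u)]
  have := int1.union int2
  rwa [Ioc_union_Ioc_eq_Ioc (le_of_lt h2) (by linarith)] at this

variable {T₀ : ℝ} {f : ℝ → ℝ}

/-- a.e. point of `μ.prod μ` lies in `Ioc 0 T₀ ×ˢ Ioc 0 T₀`. -/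
lemma ae_mem_prod (hT₀ : 0 < T₀) :
    ∀ᵐ p ∂((volume.restrict (Ioc (0:ℝ) T₀)).prod (volume.restrict (Ioc (0:ℝ) T₀))),
      p ∈ Ioc (0:ℝ) T₀ ×ˢ Ioc (0:ℝ) T₀ := by
  rw [Measure.prod_restrict]
  exact ae_restrict_mem (measurableSet_Ioc.prod measurableSet_Ioc)

lemma W_int (hT₀ : 0 < T₀) (hfm : Measurable f)
    (hK : Integrable (fun p : ℝ × ℝ => |f p.1 * f p.2| * Real.log (T₀ / max p.1 p.2))
      ((volume.restrict (Ioc 0 T₀)).prod (volume.restrict (Ioc 0 T₀)))) :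
    Integrable (fun p : ℝ × ℝ => f p.1 * f p.2 * Real.log (T₀ / max p.1 p.2))
      ((volume.restrict (Ioc 0 T₀)).prod (volume.restrict (Ioc 0 T₀))) := by
  refine hK.mono' ?_ ?_
  · apply Measurable.aestronglyMeasurable
    exact ((hfm.comp measurable_fst).mul (hfm.comp measurable_snd)).mul
      ((measurable_const.div (measurable_fst.max measurable_snd)).log)
  · filter_upwards [ae_mem_prod hT₀] with p hp
    have hm0 : 0 < max p.1 p.2 := lt_max_of_lt_left hp.1.1
    have hlognn : 0 ≤ Real.log (T₀ / max p.1 p.2) :=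
      Real.log_nonneg ((one_le_div hm0).mpr (max_le hp.1.2 hp.2.2))
    rw [Real.norm_eq_abs, abs_mul, abs_of_nonneg hlognn]

noncomputable def Tfun (T₀ : ℝ) (f : ℝ → ℝ) (z : (ℝ × ℝ) × ℝ) : ℝ :=
  if max z.1.1 z.1.2 ≤ z.2 then f z.1.1 * f z.1.2 / z.2 else 0

lemma Tfun_meas (hfm : Measurable f) : Measurable (Tfun T₀ f) := by
  apply Measurable.ite
  · exact measurableSet_le ((measurable_fst.comp measurable_fst).max
      (measurable_snd.comp measurable_fst)) measurable_snd
  · exact ((hfm.comp (measurable_fst.comp measurable_fst)).mul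
      (hfm.comp (measurable_snd.comp measurable_fst))).div measurable_snd
  · exact measurable_const

/-- pointwise: `T ((r,τ),u) = (f r * f τ) * (if max r τ ≤ u then 1/u else 0)` -/
lemma Tfun_eq (p : ℝ × ℝ) (u : ℝ) :
    Tfun T₀ f (p, u) = (f p.1 * f p.2) * (if max p.1 p.2 ≤ u then 1/u else 0) := by
  unfold Tfun
  by_cases h : max p.1 p.2 ≤ u <;> simp [h] <;> ring

/-- the inner `u`-integral of `Tfun` for good `p`. -/
lemma Tfun_inner (hT₀ : 0 < T₀) (p : ℝ × ℝ) (hp : p ∈ Ioc (0:ℝ) T₀ ×ˢ Ioc (0:ℝ) T₀) :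
    (IntegrableOn (fun u => Tfun T₀ f (p, u)) (Ioc 0 T₀)) ∧
    ∫ u in Ioc (0:ℝ) T₀, Tfun T₀ f (p, u) = f p.1 * f p.2 * Real.log (T₀ / max p.1 p.2) := by
  have hm0 : 0 < max p.1 p.2 := lt_max_of_lt_left hp.1.1
  have hmT : max p.1 p.2 ≤ T₀ := max_le hp.1.2 hp.2.2
  have h := inner_log T₀ (max p.1 p.2) hm0 hmT
  constructor
  · simp only [Tfun_eq]
    exact h.1.const_mul _
  · simp only [Tfun_eq]
    rw [MeasureTheory.integral_const_mul, h.2]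

lemma Tfun_int (hT₀ : 0 < T₀) (hfm : Measurable f)
    (hK : Integrable (fun p : ℝ × ℝ => |f p.1 * f p.2| * Real.log (T₀ / max p.1 p.2))
      ((volume.restrict (Ioc 0 T₀)).prod (volume.restrict (Ioc 0 T₀)))) :
    Integrable (Tfun T₀ f)
      (((volume.restrict (Ioc 0 T₀)).prod (volume.restrict (Ioc 0 T₀))).prod
        (volume.restrict (Ioc 0 T₀))) := by
  refine ⟨(Tfun_meas hfm).aestronglyMeasurable, ?_⟩
  rw [HasFiniteIntegral, lintegral_prod _ ((Tfun_meas hfm).enorm.aemeasurable)]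
  have hae : ∀ᵐ p ∂((volume.restrict (Ioc (0:ℝ) T₀)).prod (volume.restrict (Ioc (0:ℝ) T₀))),
      (∫⁻ u in Ioc (0:ℝ) T₀, ‖Tfun T₀ f (p, u)‖ₑ)
        = ENNReal.ofReal (|f p.1 * f p.2| * Real.log (T₀ / max p.1 p.2)) := by
    filter_upwards [ae_mem_prod hT₀] with p hp
    have hm0 : 0 < max p.1 p.2 := lt_max_of_lt_left hp.1.1
    have hmT : max p.1 p.2 ≤ T₀ := max_le hp.1.2 hp.2.2
    have hil := inner_log T₀ (max p.1 p.2) hm0 hmT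
    have habs : IntegrableOn (fun u => |f p.1 * f p.2| * (if max p.1 p.2 ≤ u then 1/u else 0))
        (Ioc 0 T₀) := hil.1.const_mul _
    have hnn : 0 ≤ᵐ[volume.restrict (Ioc (0:ℝ) T₀)]
        (fun u => |f p.1 * f p.2| * (if max p.1 p.2 ≤ u then 1/u else 0)) := by
      filter_upwards [ae_restrict_mem measurableSet_Ioc] with u hu
      have : 0 ≤ (if max p.1 p.2 ≤ u then 1/u else 0) := by
        split
        · exact div_nonneg zero_le_one hu.1.le
        · exact le_rfl
      positivity
    have key : ∫⁻ u in Ioc (0:ℝ) T₀, ‖Tfun T₀ f (p, u)‖ₑ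
        = ∫⁻ u in Ioc (0:ℝ) T₀,
          ENNReal.ofReal (|f p.1 * f p.2| * (if max p.1 p.2 ≤ u then 1/u else 0)) := by
      apply lintegral_congr_ae
      filter_upwards [ae_restrict_mem measurableSet_Ioc] with u hu
      rw [Tfun_eq, Real.enorm_eq_ofReal_abs, abs_mul]
      congr 1
      congr 1
      split
      · rw [abs_of_nonneg (div_nonneg zero_le_one hu.1.le)]
      · rw [abs_zero]
    rw [key, ← ofReal_integral_eq_lintegral_ofReal habs hnn, MeasureTheory.integral_const_mul,
      hil.2]
  rw [lintegral_congr_ae hae]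
  have hKnn : 0 ≤ᵐ[(volume.restrict (Ioc (0:ℝ) T₀)).prod (volume.restrict (Ioc (0:ℝ) T₀))]
      (fun p : ℝ × ℝ => |f p.1 * f p.2| * Real.log (T₀ / max p.1 p.2)) := by
    filter_upwards [ae_mem_prod hT₀] with p hp
    have hm0 : 0 < max p.1 p.2 := lt_max_of_lt_left hp.1.1
    have : 0 ≤ Real.log (T₀ / max p.1 p.2) :=
      Real.log_nonneg ((one_le_div hm0).mpr (max_le hp.1.2 hp.2.2))
    positivity
  rw [← ofReal_integral_eq_lintegral_ofReal hK hKnn]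
  exact ENNReal.ofReal_lt_top

lemma lam_eq (hu : u ∈ Ioc (0:ℝ) T₀) :
    ∫ t in (0:ℝ)..u, f t = ∫ r in Ioc (0:ℝ) T₀, (Ioc (0:ℝ) u).indicator f r := by
  rw [intervalIntegral.integral_of_le hu.1.le, integral_indicator measurableSet_Ioc]
  rw [Measure.restrict_restrict measurableSet_Ioc,
    Set.inter_eq_self_of_subset_left (Ioc_subset_Ioc_right hu.2)]

lemma lamsq (hT₀ : 0 < T₀) (hfm : Measurable f)
    (hK : Integrable (fun p : ℝ × ℝ => |f p.1 * f p.2| * Real.log (T₀ / max p.1 p.2))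
      ((volume.restrict (Ioc 0 T₀)).prod (volume.restrict (Ioc 0 T₀)))) :
    Integrable (fun u => (∫ t in (0:ℝ)..u, f t) ^ 2 / u) (volume.restrict (Ioc 0 T₀)) ∧
    ∫ u in Ioc (0:ℝ) T₀, (∫ t in (0:ℝ)..u, f t) ^ 2 / u
      = ∫ p, f p.1 * f p.2 * Real.log (T₀ / max p.1 p.2)
          ∂((volume.restrict (Ioc 0 T₀)).prod (volume.restrict (Ioc 0 T₀))) := by
  have hTi := Tfun_int hT₀ hfm hK
  have heq : ∀ᵐ u ∂(volume.restrict (Ioc (0:ℝ) T₀)),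
      (∫ t in (0:ℝ)..u, f t) ^ 2 / u
        = ∫ p, Tfun T₀ f (p, u)
            ∂((volume.restrict (Ioc 0 T₀)).prod (volume.restrict (Ioc 0 T₀))) := by
    filter_upwards [ae_restrict_mem measurableSet_Ioc] with u hu
    have h1 : ∫ p, Tfun T₀ f (p, u)
          ∂((volume.restrict (Ioc 0 T₀)).prod (volume.restrict (Ioc 0 T₀)))
        = ∫ p, ((Ioc (0:ℝ) u).indicator f p.1 * (Ioc (0:ℝ) u).indicator f p.2) / u
          ∂((volume.restrict (Ioc 0 T₀)).prod (volume.restrict (Ioc 0 T₀))) := by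
      apply integral_congr_ae
      filter_upwards [ae_mem_prod hT₀] with p hp
      have e1 : (Ioc (0:ℝ) u).indicator f p.1 = if p.1 ≤ u then f p.1 else 0 := by
        simp [Set.indicator_apply, Set.mem_Ioc, hp.1.1]
      have e2 : (Ioc (0:ℝ) u).indicator f p.2 = if p.2 ≤ u then f p.2 else 0 := by
        simp [Set.indicator_apply, Set.mem_Ioc, hp.2.1]
      unfold Tfun
      rw [e1, e2]
      by_cases h1 : p.1 ≤ u <;> by_cases h2 : p.2 ≤ u <;>
        simp [max_le_iff, h1, h2]
    rw [h1, integral_div, integral_prod_mul, ← lam_eq hu, sq]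
  constructor
  · exact (hTi.integral_prod_right).congr
      (by filter_upwards [heq] with u hu using hu.symm)
  · rw [integral_congr_ae heq,
      ← integral_integral_swap (f := fun p u => Tfun T₀ f (p, u)) hTi]
    apply integral_congr_ae
    filter_upwards [ae_mem_prod hT₀] with p hp
    exact (Tfun_inner hT₀ p hp).2

noncomputable def Sfun (T₀ : ℝ) (f : ℝ → ℝ) (z : ℝ × ℝ) : ℝ :=
  if z.2 ≤ z.1 then f z.2 * f z.1 * Real.log (T₀ / z.1) else 0

lemma Sfun_int (hT₀ : 0 < T₀) (hfm : Measurable f)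
    (hK : Integrable (fun p : ℝ × ℝ => |f p.1 * f p.2| * Real.log (T₀ / max p.1 p.2))
      ((volume.restrict (Ioc 0 T₀)).prod (volume.restrict (Ioc 0 T₀)))) :
    Integrable (Sfun T₀ f)
      ((volume.restrict (Ioc 0 T₀)).prod (volume.restrict (Ioc 0 T₀))) := by
  refine hK.mono' ?_ ?_
  · apply Measurable.aestronglyMeasurable
    apply Measurable.ite (measurableSet_le measurable_snd measurable_fst)
    · exact ((hfm.comp measurable_snd).mul (hfm.comp measurable_fst)).mul
        ((measurable_const.div measurable_fst).log)
    · exact measurable_const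
  · filter_upwards [ae_mem_prod hT₀] with z hz
    have hm0 : 0 < max z.1 z.2 := lt_max_of_lt_left hz.1.1
    have hlognn : 0 ≤ Real.log (T₀ / max z.1 z.2) :=
      Real.log_nonneg ((one_le_div hm0).mpr (max_le hz.1.2 hz.2.2))
    unfold Sfun
    rw [Real.norm_eq_abs]
    split
    · rename_i h
      have hln : 0 ≤ Real.log (T₀ / z.1) := Real.log_nonneg ((one_le_div hz.1.1).mpr hz.1.2)
      rw [max_eq_left h, abs_mul, abs_of_nonneg hln, abs_mul, abs_mul,
        mul_comm |f z.2| |f z.1|]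
    · rw [abs_zero]; positivity

lemma diag_null (hT₀ : 0 < T₀) :
    ((volume.restrict (Ioc (0:ℝ) T₀)).prod (volume.restrict (Ioc (0:ℝ) T₀)))
      {z : ℝ × ℝ | z.1 = z.2} = 0 := by
  rw [Measure.prod_apply (measurableSet_eq_fun measurable_fst measurable_snd)]
  have : ∀ x : ℝ, (volume.restrict (Ioc (0:ℝ) T₀)) (Prod.mk x ⁻¹' {z : ℝ × ℝ | z.1 = z.2}) = 0 := by
    intro x
    have hpre : (Prod.mk x ⁻¹' {z : ℝ × ℝ | z.1 = z.2}) = {x} := by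
      ext y; simp [eq_comm]
    rw [hpre]
    exact le_antisymm (le_trans (Measure.restrict_apply_le _ _) (by simp)) zero_le
  simp [this]

lemma Sfun_id (hT₀ : 0 < T₀) (hfm : Measurable f)
    (hK : Integrable (fun p : ℝ × ℝ => |f p.1 * f p.2| * Real.log (T₀ / max p.1 p.2))
      ((volume.restrict (Ioc 0 T₀)).prod (volume.restrict (Ioc 0 T₀)))) :
    ∫ z, Sfun T₀ f z ∂((volume.restrict (Ioc 0 T₀)).prod (volume.restrict (Ioc 0 T₀)))
      = (1/2) * ∫ p, f p.1 * f p.2 * Real.log (T₀ / max p.1 p.2)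
          ∂((volume.restrict (Ioc 0 T₀)).prod (volume.restrict (Ioc 0 T₀))) := by
  have hS := Sfun_int hT₀ hfm hK
  have hSswap : Integrable (fun z : ℝ × ℝ => Sfun T₀ f z.swap)
      ((volume.restrict (Ioc 0 T₀)).prod (volume.restrict (Ioc 0 T₀))) := hS.swap
  have hd : ∀ᵐ z ∂((volume.restrict (Ioc (0:ℝ) T₀)).prod (volume.restrict (Ioc (0:ℝ) T₀))),
      z.1 ≠ (z.2 : ℝ) := by
    rw [ae_iff]
    simpa using diag_null hT₀
  have hsum : ∀ᵐ z ∂((volume.restrict (Ioc (0:ℝ) T₀)).prod (volume.restrict (Ioc (0:ℝ) T₀))),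
      Sfun T₀ f z + Sfun T₀ f z.swap = f z.1 * f z.2 * Real.log (T₀ / max z.1 z.2) := by
    filter_upwards [hd] with z hz
    rcases lt_or_gt_of_ne hz with h | h
    · have e1 : Sfun T₀ f z = 0 := if_neg (not_le.mpr h)
      have e2 : Sfun T₀ f z.swap = f z.1 * f z.2 * Real.log (T₀ / z.2) := by
        simp only [Sfun, Prod.fst_swap, Prod.snd_swap, if_pos h.le]
      rw [e1, e2, zero_add, max_eq_right h.le]
    · have e1 : Sfun T₀ f z = f z.2 * f z.1 * Real.log (T₀ / z.1) := by
        simp only [Sfun, if_pos h.le]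
      have e2 : Sfun T₀ f z.swap = 0 := by
        simp only [Sfun, Prod.fst_swap, Prod.snd_swap, if_neg (not_le.mpr h)]
      rw [e1, e2, add_zero, max_eq_left h.le]
      ring
  have h2 : (∫ z, Sfun T₀ f z ∂((volume.restrict (Ioc 0 T₀)).prod (volume.restrict (Ioc 0 T₀))))
        + ∫ z, Sfun T₀ f z.swap
        ∂((volume.restrict (Ioc 0 T₀)).prod (volume.restrict (Ioc 0 T₀)))
      = ∫ p, f p.1 * f p.2 * Real.log (T₀ / max p.1 p.2)
          ∂((volume.restrict (Ioc 0 T₀)).prod (volume.restrict (Ioc 0 T₀))) := by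
    rw [← integral_add hS hSswap]
    exact integral_congr_ae hsum
  rw [integral_prod_swap (Sfun T₀ f)] at h2
  linarith

lemma logterm (hT₀ : 0 < T₀) (hfm : Measurable f)
    (hK : Integrable (fun p : ℝ × ℝ => |f p.1 * f p.2| * Real.log (T₀ / max p.1 p.2))
      ((volume.restrict (Ioc 0 T₀)).prod (volume.restrict (Ioc 0 T₀)))) :
    Integrable (fun u => Real.log (T₀ / u) * f u * (∫ t in (0:ℝ)..u, f t))
        (volume.restrict (Ioc 0 T₀)) ∧
    ∫ u in Ioc (0:ℝ) T₀, Real.log (T₀ / u) * f u * (∫ t in (0:ℝ)..u, f t)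
      = (1/2) * ∫ p, f p.1 * f p.2 * Real.log (T₀ / max p.1 p.2)
          ∂((volume.restrict (Ioc 0 T₀)).prod (volume.restrict (Ioc 0 T₀))) := by
  have hS := Sfun_int hT₀ hfm hK
  have heq : ∀ᵐ u ∂(volume.restrict (Ioc (0:ℝ) T₀)),
      Real.log (T₀ / u) * f u * (∫ t in (0:ℝ)..u, f t)
        = ∫ r in Ioc (0:ℝ) T₀, Sfun T₀ f (u, r) := by
    filter_upwards [ae_restrict_mem measurableSet_Ioc] with u hu
    have h1 : ∫ r in Ioc (0:ℝ) T₀, Sfun T₀ f (u, r)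
        = ∫ r in Ioc (0:ℝ) T₀, (f u * Real.log (T₀ / u)) * (Ioc (0:ℝ) u).indicator f r := by
      apply integral_congr_ae
      filter_upwards [ae_restrict_mem measurableSet_Ioc] with r hr
      have e : (Ioc (0:ℝ) u).indicator f r = if r ≤ u then f r else 0 := by
        simp [Set.indicator_apply, Set.mem_Ioc, hr.1]
      rw [e]
      unfold Sfun
      by_cases h : r ≤ u <;> simp [h] <;> ring
    rw [h1, MeasureTheory.integral_const_mul, ← lam_eq hu]
    ring
  constructor
  · exact (hS.integral_prod_left).congr
      (by filter_upwards [heq] with u hu using hu.symm)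
  · rw [integral_congr_ae heq,
      integral_integral (f := fun u r => Sfun T₀ f (u, r)) hS]
    exact Sfun_id hT₀ hfm hK

lemma per_f (hT₀ : 0 < T₀) (hfm : Measurable f)
    (hK : Integrable (fun p : ℝ × ℝ => |f p.1 * f p.2| * Real.log (T₀ / max p.1 p.2))
      ((volume.restrict (Ioc 0 T₀)).prod (volume.restrict (Ioc 0 T₀))))
    (hQ : IntegrableOn (fun u => u * f u ^ 2) (Ioc 0 T₀)) :
    (1/2) * ∫ u in Ioc (0:ℝ) T₀,
        ((∫ t in (0:ℝ)..u, f t) / (2 * Real.sqrt u) + Real.sqrt u * f u) ^ 2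
      ≤ ∫ u in Ioc (0:ℝ) T₀,
          (Real.log (T₀ / u) * f u * (∫ t in (0:ℝ)..u, f t) / 2 + u * f u ^ 2) := by
  have hlog := logterm hT₀ hfm hK
  have hlam := lamsq hT₀ hfm hK
  set M : ℝ → ℝ := fun u => (∫ t in (0:ℝ)..u, f t) ^ 2 / u / 4 + u * f u ^ 2 with hM
  have hMi : Integrable M (volume.restrict (Ioc 0 T₀)) := (hlam.1.div_const 4).add hQ
  have hpt : ∀ᵐ u ∂(volume.restrict (Ioc (0:ℝ) T₀)),
      (1/2) * ((∫ t in (0:ℝ)..u, f t) / (2 * Real.sqrt u) + Real.sqrt u * f u) ^ 2 ≤ M u := by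
    filter_upwards [ae_restrict_mem measurableSet_Ioc] with u hu
    set a := ∫ t in (0:ℝ)..u, f t
    set s := Real.sqrt u with hs'
    have hspos : 0 < s := Real.sqrt_pos.mpr hu.1
    have hs : s ^ 2 = u := Real.sq_sqrt hu.1.le
    have hx : a ^ 2 / u / 4 = (a / (2*s)) ^ 2 := by
      rw [← hs]; ring
    have hy : u * f u ^ 2 = (s * f u) ^ 2 := by rw [← hs]; ring
    rw [hM]
    simp only
    rw [hx, hy]
    nlinarith [sq_nonneg (a / (2*s) - s * f u)]
  have hle : (1/2) * ∫ u in Ioc (0:ℝ) T₀,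
        ((∫ t in (0:ℝ)..u, f t) / (2 * Real.sqrt u) + Real.sqrt u * f u) ^ 2
      ≤ ∫ u in Ioc (0:ℝ) T₀, M u := by
    rw [← MeasureTheory.integral_const_mul]
    apply integral_mono_of_nonneg ?_ hMi hpt
    filter_upwards with u
    positivity
  refine le_trans hle (le_of_eq ?_)
  have hsplit1 : ∫ u in Ioc (0:ℝ) T₀, M u
      = (∫ u in Ioc (0:ℝ) T₀, (∫ t in (0:ℝ)..u, f t) ^ 2 / u) / 4
        + ∫ u in Ioc (0:ℝ) T₀, u * f u ^ 2 := by
    rw [hM, integral_add (hlam.1.div_const 4) hQ, integral_div]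
  have hsplit2 : ∫ u in Ioc (0:ℝ) T₀,
        (Real.log (T₀ / u) * f u * (∫ t in (0:ℝ)..u, f t) / 2 + u * f u ^ 2)
      = (∫ u in Ioc (0:ℝ) T₀, Real.log (T₀ / u) * f u * (∫ t in (0:ℝ)..u, f t)) / 2
        + ∫ u in Ioc (0:ℝ) T₀, u * f u ^ 2 := by
    rw [integral_add (hlog.1.div_const 2) hQ, integral_div]
  rw [hsplit1, hsplit2, hlam.2, hlog.2]
  ring

lemma rhs_eq (hT₀ : 0 < T₀) (hfm : Measurable f)
    (hK : Integrable (fun p : ℝ × ℝ => |f p.1 * f p.2| * Real.log (T₀ / max p.1 p.2))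
      ((volume.restrict (Ioc 0 T₀)).prod (volume.restrict (Ioc 0 T₀))))
    (hQ : IntegrableOn (fun u => u * f u ^ 2) (Ioc 0 T₀)) :
    ∫ u in Ioc (0:ℝ) T₀,
        (Real.log (T₀ / u) * f u * (∫ t in (0:ℝ)..u, f t) / 2 + u * f u ^ 2)
      = (1/4) * (∫ p, f p.1 * f p.2 * Real.log (T₀ / max p.1 p.2)
          ∂((volume.restrict (Ioc 0 T₀)).prod (volume.restrict (Ioc 0 T₀))))
        + ∫ u in Ioc (0:ℝ) T₀, u * f u ^ 2 := by
  have hlog := logterm hT₀ hfm hK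
  rw [integral_add (hlog.1.div_const 2) hQ, integral_div, hlog.2]
  ring


/-- Condition (C1) of the paper's Theorem 1 implies the generalized Novikov condition
`E_P[exp((1/2)∫∫ g(·,s,u)² du ds)] < ∞`. -/
theorem stmt5 {Ω : Type*} [MeasurableSpace Ω] (P : Measure Ω) [IsProbabilityMeasure P]
    (T₀ : ℝ) (hT₀ : 0 < T₀) (η : Ω → ℝ → ℝ → ℝ)
    (hmeas : Measurable (fun p : Ω × ℝ × ℝ => η p.1 p.2.1 p.2.2))
    (hintabs : ∀ᵐ ω ∂P, IntegrableOn
      (fun p : ℝ × ℝ × ℝ => |η ω p.1 p.2.1 * η ω p.1 p.2.2| * Real.log (T₀ / max p.2.1 p.2.2))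
      (Ioc (0:ℝ) T₀ ×ˢ Ioc (0:ℝ) T₀ ×ˢ Ioc (0:ℝ) T₀))
    (hsq : ∀ᵐ ω ∂P, IntegrableOn (fun p : ℝ × ℝ => p.2 * η ω p.1 p.2 ^ 2)
      (Ioc (0:ℝ) T₀ ×ˢ Ioc (0:ℝ) T₀))
    (hC1 : ∫⁻ ω, ENNReal.ofReal (Real.exp
        (∫ t in Ioc (0:ℝ) T₀, ∫ u in Ioc (0:ℝ) T₀,
          (Real.log (T₀ / u) * η ω t u * mpr η ω t u / 2 + u * η ω t u ^ 2))) ∂P < ⊤) :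
    ∫⁻ ω, ENNReal.ofReal (Real.exp
        ((1 / 2) * ∫ s in Ioc (0:ℝ) T₀, ∫ u in Ioc (0:ℝ) T₀, (gker η ω s u) ^ 2)) ∂P < ⊤ := by
  refine lt_of_le_of_lt (lintegral_mono_ae ?_) hC1
  filter_upwards [hintabs, hsq] with ω h3 h2
  apply ENNReal.ofReal_le_ofReal
  apply Real.exp_le_exp.mpr
  have hmeq2 : (volume.restrict (Ioc (0:ℝ) T₀)).prod (volume.restrict (Ioc (0:ℝ) T₀))
      = (volume : Measure (ℝ × ℝ)).restrict (Ioc (0:ℝ) T₀ ×ˢ Ioc (0:ℝ) T₀) := by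
    rw [Measure.prod_restrict, ← MeasureTheory.Measure.volume_eq_prod]
  have hmeq3 : (volume.restrict (Ioc (0:ℝ) T₀)).prod
        ((volume.restrict (Ioc (0:ℝ) T₀)).prod (volume.restrict (Ioc (0:ℝ) T₀)))
      = (volume : Measure (ℝ × ℝ × ℝ)).restrict
        (Ioc (0:ℝ) T₀ ×ˢ Ioc (0:ℝ) T₀ ×ˢ Ioc (0:ℝ) T₀) := by
    rw [Measure.prod_restrict, ← MeasureTheory.Measure.volume_eq_prod, Measure.prod_restrict,
      ← MeasureTheory.Measure.volume_eq_prod]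
  have hfm : ∀ s : ℝ, Measurable (fun u => η ω s u) := fun s =>
    hmeas.comp (measurable_const.prodMk (measurable_const.prodMk measurable_id))
  have habs3 : Integrable
      (fun q : ℝ × ℝ × ℝ => |η ω q.1 q.2.1 * η ω q.1 q.2.2| * Real.log (T₀ / max q.2.1 q.2.2))
      ((volume.restrict (Ioc (0:ℝ) T₀)).prod
        ((volume.restrict (Ioc (0:ℝ) T₀)).prod (volume.restrict (Ioc (0:ℝ) T₀)))) := by
    rw [hmeq3]; exact h3
  have hsq2 : Integrable (fun p : ℝ × ℝ => p.2 * η ω p.1 p.2 ^ 2)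
      ((volume.restrict (Ioc (0:ℝ) T₀)).prod (volume.restrict (Ioc (0:ℝ) T₀))) := by
    rw [hmeq2]; exact h2
  have haes : ∀ᵐ s ∂(volume.restrict (Ioc (0:ℝ) T₀)), Integrable
      (fun p : ℝ × ℝ => |η ω s p.1 * η ω s p.2| * Real.log (T₀ / max p.1 p.2))
      ((volume.restrict (Ioc (0:ℝ) T₀)).prod (volume.restrict (Ioc (0:ℝ) T₀))) :=
    habs3.prod_right_ae
  have haeq : ∀ᵐ s ∂(volume.restrict (Ioc (0:ℝ) T₀)),
      Integrable (fun u => u * η ω s u ^ 2) (volume.restrict (Ioc (0:ℝ) T₀)) :=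
    hsq2.prod_right_ae
  have hW3 : Integrable
      (fun q : ℝ × ℝ × ℝ => η ω q.1 q.2.1 * η ω q.1 q.2.2 * Real.log (T₀ / max q.2.1 q.2.2))
      ((volume.restrict (Ioc (0:ℝ) T₀)).prod
        ((volume.restrict (Ioc (0:ℝ) T₀)).prod (volume.restrict (Ioc (0:ℝ) T₀)))) := by
    refine habs3.mono' ?_ ?_
    · apply Measurable.aestronglyMeasurable
      have hη2 : Measurable (fun q : ℝ × ℝ × ℝ => η ω q.1 q.2.1) :=
        hmeas.comp (measurable_const.prodMk (measurable_fst.prodMk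
          (measurable_fst.comp measurable_snd)))
      have hη3 : Measurable (fun q : ℝ × ℝ × ℝ => η ω q.1 q.2.2) :=
        hmeas.comp (measurable_const.prodMk (measurable_fst.prodMk
          (measurable_snd.comp measurable_snd)))
      exact (hη2.mul hη3).mul ((measurable_const.div
        (((measurable_fst.comp measurable_snd)).max
          ((measurable_snd.comp measurable_snd)))).log)
    · have hq3 : ∀ᵐ q ∂((volume.restrict (Ioc (0:ℝ) T₀)).prod
          ((volume.restrict (Ioc (0:ℝ) T₀)).prod (volume.restrict (Ioc (0:ℝ) T₀)))),
          q ∈ Ioc (0:ℝ) T₀ ×ˢ Ioc (0:ℝ) T₀ ×ˢ Ioc (0:ℝ) T₀ := by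
        rw [hmeq3]
        exact ae_restrict_mem ((measurableSet_Ioc.prod (measurableSet_Ioc.prod measurableSet_Ioc)))
      filter_upwards [hq3] with q hq
      have hm0 : 0 < max q.2.1 q.2.2 := lt_max_of_lt_left hq.2.1.1
      have hlognn : 0 ≤ Real.log (T₀ / max q.2.1 q.2.2) :=
        Real.log_nonneg ((one_le_div hm0).mpr (max_le hq.2.1.2 hq.2.2.2))
      rw [Real.norm_eq_abs, abs_mul, abs_of_nonneg hlognn]
  have hBi : Integrable (fun s => ∫ u in Ioc (0:ℝ) T₀,
      (Real.log (T₀ / u) * η ω s u * mpr η ω s u / 2 + u * η ω s u ^ 2))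
      (volume.restrict (Ioc (0:ℝ) T₀)) := by
    have hKint : Integrable (fun s => ∫ p, η ω s p.1 * η ω s p.2 * Real.log (T₀ / max p.1 p.2)
        ∂((volume.restrict (Ioc (0:ℝ) T₀)).prod (volume.restrict (Ioc (0:ℝ) T₀))))
        (volume.restrict (Ioc (0:ℝ) T₀)) := hW3.integral_prod_left
    have hQint : Integrable (fun s => ∫ u, u * η ω s u ^ 2 ∂(volume.restrict (Ioc (0:ℝ) T₀)))
        (volume.restrict (Ioc (0:ℝ) T₀)) := hsq2.integral_prod_left
    refine Integrable.congr ((hKint.const_mul (1/4)).add hQint) ?_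
    filter_upwards [haes, haeq] with s hKs hQs
    simp only [Pi.add_apply]
    rw [← rhs_eq hT₀ (hfm s) hKs hQs]
    rfl
  rw [← MeasureTheory.integral_const_mul]
  apply integral_mono_of_nonneg ?_ hBi ?_
  · filter_upwards with s
    simp only [Pi.zero_apply]
    have h0 : 0 ≤ ∫ u in Ioc (0:ℝ) T₀, (gker η ω s u) ^ 2 :=
      integral_nonneg fun u => sq_nonneg _
    linarith
  · filter_upwards [haes, haeq] with s hKs hQs
    exact per_f hT₀ (hfm s) hKs hQs
end

section
/- Let (Ω, 𝓕, P) be a probability space, T₀ > 0, and let η : Ω × [0,T₀] × [0,T₀] → ℝ be jointly measurable with η(ω,·,·) ∈ L²([0,T₀]²) for P-a.e. ω. If E_P[ exp( (5T₀/4) ∫₀^{T₀}∫₀^{T₀} η(·,t,u)² du dt ) ] < ∞, then E_P[ exp( (1/2) ∫₀^{T₀}∫₀^{T₀} g(·,s,u)² du ds ) ] < ∞. -/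
open MeasureTheory Real Set

lemma cs_aux (u : ℝ) (hu : 0 < u) (f : ℝ → ℝ) (hf : MemLp f 2 (volume.restrict (Ioc 0 u))) :
    (∫ v in Ioc (0:ℝ) u, f v) ^ 2 ≤ u * ∫ v in Ioc (0:ℝ) u, f v ^ 2 := by
  have h1 : MemLp (fun v => |f v|) (ENNReal.ofReal 2) (volume.restrict (Ioc 0 u)) := by
    simpa [Real.norm_eq_abs, ENNReal.ofReal_ofNat] using hf.norm
  have h2 : MemLp (fun _ : ℝ => (1:ℝ)) (ENNReal.ofReal 2) (volume.restrict (Ioc 0 u)) :=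
    memLp_const 1
  have hpq : Real.HolderConjugate 2 2 := Real.holderConjugate_iff.mpr ⟨one_lt_two, by norm_num⟩
  have := integral_mul_le_Lp_mul_Lq_of_nonneg (μ := volume.restrict (Ioc 0 u)) hpq
    (f := fun v => |f v|) (g := fun _ => 1)
    (Filter.Eventually.of_forall fun v => abs_nonneg _)
    (Filter.Eventually.of_forall fun v => one_pos.le) h1 h2
  simp only [mul_one] at this
  have hone : ∫ _v in Ioc (0:ℝ) u, (1:ℝ) ^ (2:ℝ) = u := by
    simp [Real.volume_Ioc, hu.le]
  have hsq : ∫ v in Ioc (0:ℝ) u, |f v| ^ (2:ℝ) = ∫ v in Ioc (0:ℝ) u, f v ^ 2 := by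
    refine integral_congr_ae (Filter.Eventually.of_forall fun v => ?_)
    simp only [Real.rpow_two, sq_abs]
  rw [hone, hsq] at this
  have habs : |∫ v in Ioc (0:ℝ) u, f v| ≤ ∫ v in Ioc (0:ℝ) u, |f v| := by
    simpa [Real.norm_eq_abs] using norm_integral_le_integral_norm (μ := volume.restrict (Ioc 0 u)) f
  have hFnn : 0 ≤ ∫ v in Ioc (0:ℝ) u, f v ^ 2 := integral_nonneg fun v => sq_nonneg _
  calc (∫ v in Ioc (0:ℝ) u, f v) ^ 2
      ≤ (∫ v in Ioc (0:ℝ) u, |f v|) ^ 2 := by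
        rw [← sq_abs (∫ v in Ioc (0:ℝ) u, f v)]
        exact pow_le_pow_left₀ (abs_nonneg _) habs 2
    _ ≤ ((∫ v in Ioc (0:ℝ) u, f v ^ 2) ^ ((1:ℝ)/2) * u ^ ((1:ℝ)/2)) ^ 2 :=
        pow_le_pow_left₀ (integral_nonneg fun v => abs_nonneg _) this 2
    _ = u * ∫ v in Ioc (0:ℝ) u, f v ^ 2 := by
        rw [mul_pow, ← Real.rpow_natCast _ 2, ← Real.rpow_natCast (u ^ ((1:ℝ)/2)) 2,
          ← Real.rpow_mul hFnn, ← Real.rpow_mul hu.le]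
        norm_num [mul_comm]

/-- Condition (C2) of the paper's Corollary 1,
`E_P[exp((5T₀/4)∫∫ η²)] < ∞`, implies the generalized Novikov condition
`E_P[exp((1/2)∫∫ g(·,s,u)² du ds)] < ∞`. -/
theorem stmt6 {Ω : Type*} [MeasurableSpace Ω] (P : Measure Ω) [IsProbabilityMeasure P]
    (T₀ : ℝ) (hT₀ : 0 < T₀) (η : Ω → ℝ → ℝ → ℝ)
    (hmeas : Measurable (fun p : Ω × ℝ × ℝ => η p.1 p.2.1 p.2.2))
    (hL2 : ∀ᵐ ω ∂P, MemLp (Function.uncurry (η ω)) 2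
      (volume.restrict (Ioc (0:ℝ) T₀ ×ˢ Ioc (0:ℝ) T₀)))
    (hC2 : ∫⁻ ω, ENNReal.ofReal (Real.exp
        ((5 * T₀ / 4) * ∫ t in Ioc (0:ℝ) T₀, ∫ u in Ioc (0:ℝ) T₀, η ω t u ^ 2)) ∂P < ⊤) :
    ∫⁻ ω, ENNReal.ofReal (Real.exp
        ((1 / 2) * ∫ s in Ioc (0:ℝ) T₀, ∫ u in Ioc (0:ℝ) T₀, (gker η ω s u) ^ 2)) ∂P < ⊤ := by
  set S : Set ℝ := Ioc (0:ℝ) T₀ with hS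
  refine lt_of_le_of_lt (lintegral_mono_ae ?_) hC2
  filter_upwards [hL2] with ω hω
  apply ENNReal.ofReal_le_ofReal
  apply Real.exp_le_exp.2
  -- product measure rewrite
  have hprod : volume.restrict (S ×ˢ S)
      = (volume.restrict S).prod (volume.restrict S) := by
    rw [Measure.volume_eq_prod, Measure.prod_restrict]
  set μs := volume.restrict S with hμs
  have hsq : Integrable (fun p : ℝ × ℝ => η ω p.1 p.2 ^ 2) (μs.prod μs) := by
    have := hω.integrable_sq
    rwa [hprod] at this
  have hFint : Integrable (fun s => ∫ u in S, η ω s u ^ 2) μs := by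
    simpa using hsq.integral_prod_left
  have hslice : ∀ᵐ s ∂μs, Integrable (fun u => η ω s u ^ 2) μs := hsq.prod_right_ae
  set F : ℝ → ℝ := fun s => ∫ u in S, η ω s u ^ 2 with hF
  have hFnn : ∀ s, 0 ≤ F s := fun s => integral_nonneg fun u => sq_nonneg _
  -- inner bound
  have hinner : ∀ᵐ s ∂μs, ∫ u in S, gker η ω s u ^ 2 ≤ (5 * T₀ / 2) * F s := by
    filter_upwards [hslice] with s hs
    -- slice is Memℒp 2
    have hms : Measurable (fun u => η ω s u) :=
      hmeas.comp (measurable_const.prodMk (measurable_const.prodMk measurable_id))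
    have hmem : MemLp (fun u => η ω s u) 2 μs :=
      (memLp_two_iff_integrable_sq hms.aestronglyMeasurable.restrict).2 hs
    -- λ bound
    have hlam : ∀ u ∈ S, (mpr η ω s u) ^ 2 ≤ u * F s := by
      intro u hu
      obtain ⟨hu0, huT⟩ := hu
      have hsub : Ioc (0:ℝ) u ⊆ S := Ioc_subset_Ioc le_rfl huT
      have hres : (μs.restrict (Ioc 0 u)) = volume.restrict (Ioc 0 u) := by
        rw [hμs, Measure.restrict_restrict_of_subset hsub]
      have hmem' : MemLp (fun v => η ω s v) 2 (volume.restrict (Ioc 0 u)) := by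
        rw [← hres]; exact hmem.restrict _
      have hcs := cs_aux u hu0 (fun v => η ω s v) hmem'
      have hmono : ∫ v in Ioc (0:ℝ) u, η ω s v ^ 2 ≤ F s := by
        refine setIntegral_mono_set hs ?_ (HasSubset.Subset.eventuallyLE hsub)
        exact Filter.Eventually.of_forall fun v => sq_nonneg _
      have hmpr : mpr η ω s u = ∫ v in Ioc (0:ℝ) u, η ω s v := by
        rw [mpr, intervalIntegral.integral_of_le hu0.le]
      rw [hmpr]
      calc (∫ v in Ioc (0:ℝ) u, η ω s v) ^ 2 ≤ u * ∫ v in Ioc (0:ℝ) u, η ω s v ^ 2 := hcs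
        _ ≤ u * F s := by exact mul_le_mul_of_nonneg_left hmono hu0.le
    -- pointwise bound on gker²
    have hptw : ∀ u ∈ S, gker η ω s u ^ 2 ≤ F s / 2 + 2 * T₀ * η ω s u ^ 2 := by
      intro u hu
      obtain ⟨hu0, huT⟩ := hu
      have hsqrt : Real.sqrt u ^ 2 = u := Real.sq_sqrt hu0.le
      have hsp : 0 < Real.sqrt u := Real.sqrt_pos.2 hu0
      set a := mpr η ω s u / (2 * Real.sqrt u)
      set b := Real.sqrt u * η ω s u
      have h1 : gker η ω s u ^ 2 ≤ 2 * a ^ 2 + 2 * b ^ 2 := by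
        have : gker η ω s u = a + b := rfl
        rw [this]; nlinarith [sq_nonneg (a - b)]
      have ha : a ^ 2 = mpr η ω s u ^ 2 / (4 * u) := by
        rw [div_pow, mul_pow, hsqrt]; norm_num
      have ha' : a ^ 2 ≤ F s / 4 := by
        rw [ha, div_le_div_iff₀ (by positivity) (by norm_num)]
        calc mpr η ω s u ^ 2 * 4 ≤ (u * F s) * 4 := by
              have := hlam u ⟨hu0, huT⟩; nlinarith
          _ = F s * (4 * u) := by ring
      have hb : b ^ 2 = u * η ω s u ^ 2 := by rw [mul_pow, hsqrt]
      have hb' : b ^ 2 ≤ T₀ * η ω s u ^ 2 := by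
        rw [hb]; exact mul_le_mul_of_nonneg_right huT (sq_nonneg _)
      nlinarith
    -- integrate the bound
    have hBint : Integrable (fun u => F s / 2 + 2 * T₀ * η ω s u ^ 2) μs := by
      have : IsFiniteMeasure μs := by
        rw [hμs]; exact ⟨by simp [hS, Real.volume_Ioc]⟩
      exact (integrable_const _).add (hs.const_mul _)
    have hle : ∫ u in S, gker η ω s u ^ 2 ≤ ∫ u in S, (F s / 2 + 2 * T₀ * η ω s u ^ 2) := by
      refine integral_mono_of_nonneg (Filter.Eventually.of_forall fun u => sq_nonneg _) hBint ?_
      have hSm : MeasurableSet S := hS ▸ measurableSet_Ioc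
      exact (ae_restrict_iff' (μ := volume) (s := S)
        (p := fun u => gker η ω s u ^ 2 ≤ F s / 2 + 2 * T₀ * η ω s u ^ 2) hSm).2
        (Filter.Eventually.of_forall hptw)
    have hcalc : ∫ u in S, (F s / 2 + 2 * T₀ * η ω s u ^ 2) = T₀ * (F s / 2) + 2 * T₀ * F s := by
      rw [integral_add (integrable_const _) (hs.const_mul _), integral_const,
        integral_const_mul]
      simp [hμs, hS, Real.volume_Ioc, hT₀.le]
      exact Or.inl rfl
    rw [hcalc] at hle
    linarith
  -- outer integration
  have houter : ∫ s in S, ∫ u in S, gker η ω s u ^ 2 ≤ (5 * T₀ / 2) * ∫ s in S, F s := by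
    have := integral_mono_of_nonneg (μ := μs)
      (f := fun s => ∫ u in S, gker η ω s u ^ 2) (g := fun s => (5 * T₀ / 2) * F s)
      (Filter.Eventually.of_forall fun s => integral_nonneg fun u => sq_nonneg _)
      (hFint.const_mul _) hinner
    rwa [integral_const_mul] at this
  have hIFnn : 0 ≤ ∫ s in S, F s := integral_nonneg fun s => hFnn s
  have : (1/2 : ℝ) * ∫ s in S, ∫ u in S, gker η ω s u ^ 2
      ≤ (1/2) * ((5 * T₀ / 2) * ∫ s in S, F s) := by linarith
  calc (1/2 : ℝ) * ∫ s in S, ∫ u in S, gker η ω s u ^ 2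
      ≤ (1/2) * ((5 * T₀ / 2) * ∫ s in S, F s) := this
    _ = (5 * T₀ / 4) * ∫ s in S, F s := by ring
end
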